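/- arXiv:2501.04207 — 3 statements merged into one kernel-verified Lean document; each statement's English description precedes it below -/
import Mathlib

section
/- Let (A, J) be a relative pair of Banach algebras with ‖1‖_A = 1 and let τ : J → ℂ be a hypertrace. Let T, W ∈ A with TW − WT ∈ J, and define β : ℝ → A by β(t) = exp(tW)·exp(T)·exp(−tW)·exp(−T). Then for every t ∈ [0,1] the element W − exp(tW)·exp(T)·W·exp(−T)·exp(−tW), which equals β′(t)·β(t)⁻¹, lies in J, and −∫_0^1 τ(W − exp(tW)·exp(T)·W·exp(−T)·exp(−tW)) dt = τ(TW − WT). -/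
open NormedSpace Nat

/-- Iterated commutator `ad_T^n W`. -/
def adSeq {A : Type*} [Ring A] (T W : A) : ℕ → A
  | 0 => W
  | n + 1 => T * adSeq T W n - adSeq T W n * T

open ContinuousLinearMap in
/-- Baker's lemma: `exp T * W * exp (-T) = ∑ ad_T^n W / n!`. -/
theorem baker_hasSum {A : Type*} [NormedRing A] [NormedAlgebra ℂ A] [CompleteSpace A] (T W : A) :
    HasSum (fun n : ℕ => ((n ! : ℂ))⁻¹ • adSeq T W n) (exp T * W * exp (-T)) := by
  set L : A →L[ℂ] A := mul ℂ A T - (mul ℂ A).flip T with hLdef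
  have hmulpow : ∀ (S : A) (n : ℕ), (mul ℂ A S) ^ n = mul ℂ A (S ^ n) := by
    intro S n
    induction n with
    | zero => ext x; simp
    | succ n ih =>
      ext x
      rw [_root_.pow_succ', ContinuousLinearMap.mul_apply, ih]
      simp [mul_apply', _root_.pow_succ', mul_assoc]
  have hflippow : ∀ (S : A) (n : ℕ), ((mul ℂ A).flip S) ^ n = (mul ℂ A).flip (S ^ n) := by
    intro S n
    induction n with
    | zero => ext x; simp
    | succ n ih =>
      ext x
      rw [pow_succ, ContinuousLinearMap.mul_apply, ih]
      simp only [mul_apply', flip_apply]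
      rw [mul_assoc, ← _root_.pow_succ']
  have hexpmul : ∀ S : A, exp (mul ℂ A S) = mul ℂ A (exp S) := by
    intro S
    rw [exp_eq_tsum ℂ, exp_eq_tsum ℂ, (mul ℂ A).map_tsum (expSeries_summable' (𝕂 := ℂ) S)]
    exact tsum_congr fun n => by rw [map_smul, hmulpow]
  have hexpflip : ∀ S : A, exp ((mul ℂ A).flip S) = (mul ℂ A).flip (exp S) := by
    intro S
    rw [exp_eq_tsum ℂ, exp_eq_tsum ℂ, ((mul ℂ A).flip).map_tsum (expSeries_summable' (𝕂 := ℂ) S)]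
    exact tsum_congr fun n => by rw [map_smul, hflippow]
  have hcomm : Commute (mul ℂ A T) (-((mul ℂ A).flip T)) := by
    apply Commute.neg_right
    refine ContinuousLinearMap.ext fun x => ?_
    simp only [ContinuousLinearMap.mul_apply, mul_apply', flip_apply]
    rw [mul_assoc]
  have hexpL : exp L = mul ℂ A (exp T) * (mul ℂ A).flip (exp (-T)) := by
    rw [hLdef, sub_eq_add_neg, exp_add_of_commute_of_mem_ball (𝕂 := ℂ) hcomm ((expSeries_radius_eq_top ℂ (A →L[ℂ] A)).symm ▸ edist_lt_top _ _) ((expSeries_radius_eq_top ℂ (A →L[ℂ] A)).symm ▸ edist_lt_top _ _), hexpmul, ← map_neg, hexpflip]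
  have hLpow : ∀ n : ℕ, (L ^ n) W = adSeq T W n := by
    intro n
    induction n with
    | zero => simp [adSeq]
    | succ n ih =>
      rw [_root_.pow_succ', ContinuousLinearMap.mul_apply, ih]
      simp only [hLdef, ContinuousLinearMap.sub_apply, mul_apply', flip_apply]
      rfl
  have h : HasSum (fun n : ℕ => ((n ! : ℂ))⁻¹ • L ^ n) (exp L) := by
    rw [exp_eq_tsum ℂ]
    exact (expSeries_summable' (𝕂 := ℂ) L).hasSum
  have h2 := (ContinuousLinearMap.apply ℂ A W).hasSum h
  simp only [ContinuousLinearMap.apply_apply, ContinuousLinearMap.smul_apply, hLpow] at h2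
  have h3 : exp L W = exp T * W * exp (-T) := by
    rw [hexpL]
    simp only [ContinuousLinearMap.mul_apply, mul_apply', flip_apply]
    rw [mul_assoc]
  rwa [h3] at h2

open NormedSpace in
/-- Let `(A, J)` be a relative pair of Banach algebras with `‖1‖ = 1` and `τ` a hypertrace on `J`.
For `T, W ∈ A` with `TW - WT ∈ J` and `β(t) = exp(tW) exp(T) exp(-tW) exp(-T)`, the element
`W - exp(tW) exp(T) W exp(-T) exp(-tW)`, which equals `β'(t) β(t)⁻¹`, lies in `J` for every
`t ∈ [0,1]`, and `-∫_0^1 τ(β'(t) β(t)⁻¹) dt = τ (TW - WT)`. -/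
theorem hypertrace_integral_logDeriv {A : Type*} [NormedRing A] [NormedAlgebra ℂ A]
    [CompleteSpace A] [NormOneClass A]
    (J : Set A) (nJ : A → ℝ) (τ : A → ℂ)
    (hJ_zero : (0 : A) ∈ J)
    (hJ_add : ∀ x ∈ J, ∀ y ∈ J, x + y ∈ J)
    (hJ_neg : ∀ x ∈ J, -x ∈ J)
    (hJ_smul : ∀ (c : ℂ), ∀ x ∈ J, c • x ∈ J)
    (hJ_mul_left : ∀ a : A, ∀ x ∈ J, a * x ∈ J)
    (hJ_mul_right : ∀ a : A, ∀ x ∈ J, x * a ∈ J)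
    (hnJ_add : ∀ x ∈ J, ∀ y ∈ J, nJ (x + y) ≤ nJ x + nJ y)
    (hnJ_smul : ∀ (c : ℂ), ∀ x ∈ J, nJ (c • x) = ‖c‖ * nJ x)
    (hnJ_def : ∀ x ∈ J, (nJ x = 0 ↔ x = 0))
    (hnJ_mul : ∀ x ∈ J, ∀ y ∈ J, nJ (x * y) ≤ nJ x * nJ y)
    (hnJ_complete : ∀ u : ℕ → A, (∀ n, u n ∈ J) →
      (∀ ε > (0 : ℝ), ∃ N, ∀ m ≥ N, ∀ n ≥ N, nJ (u m - u n) < ε) →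
      ∃ x ∈ J, ∀ ε > (0 : ℝ), ∃ N, ∀ n ≥ N, nJ (u n - x) < ε)
    (h_norm_le : ∀ x ∈ J, ‖x‖ ≤ nJ x)
    (h_abc : ∀ a b : A, ∀ x ∈ J, nJ (a * x * b) ≤ ‖a‖ * nJ x * ‖b‖)
    (hτ_add : ∀ x ∈ J, ∀ y ∈ J, τ (x + y) = τ x + τ y)
    (hτ_smul : ∀ (c : ℂ), ∀ x ∈ J, τ (c • x) = c * τ x)
    (hτ_cont : ∃ C : ℝ, ∀ x ∈ J, ‖τ x‖ ≤ C * nJ x)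
    (hτ_trace : ∀ x ∈ J, ∀ a : A, τ (x * a) = τ (a * x))
    (T W : A) (hTW : T * W - W * T ∈ J)
    (β : ℝ → A)
    (hβ : ∀ s : ℝ, β s = exp ((s : ℂ) • W) * exp T * exp (-((s : ℂ) • W)) * exp (-T)) :
    (∀ t ∈ Set.Icc (0 : ℝ) 1,
      W - exp ((t : ℂ) • W) * exp T * W * exp (-T) * exp (-((t : ℂ) • W)) ∈ J ∧
      ∃ D : A, HasDerivAt β D t ∧
        D * (exp T * exp ((t : ℂ) • W) * exp (-T) * exp (-((t : ℂ) • W))) =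
          W - exp ((t : ℂ) • W) * exp T * W * exp (-T) * exp (-((t : ℂ) • W))) ∧
    -(∫ t in (0 : ℝ)..1,
        τ (W - exp ((t : ℂ) • W) * exp T * W * exp (-T) * exp (-((t : ℂ) • W)))) =
      τ (T * W - W * T) := by
  classical
  -- basic exp facts
  have hinv : ∀ a : A, exp a * exp (-a) = 1 := fun a => by
    rw [← exp_add_of_commute_of_mem_ball (𝕂 := ℂ) ((Commute.refl a).neg_right) ((expSeries_radius_eq_top ℂ A).symm ▸ edist_lt_top _ _) ((expSeries_radius_eq_top ℂ A).symm ▸ edist_lt_top _ _), add_neg_cancel, exp_zero]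
  have hinv' : ∀ a : A, exp (-a) * exp a = 1 := fun a => by
    rw [← exp_add_of_commute_of_mem_ball (𝕂 := ℂ) ((Commute.refl a).neg_left) ((expSeries_radius_eq_top ℂ A).symm ▸ edist_lt_top _ _) ((expSeries_radius_eq_top ℂ A).symm ▸ edist_lt_top _ _), neg_add_cancel, exp_zero]
  -- basic J facts
  have hJ_sub : ∀ x ∈ J, ∀ y ∈ J, x - y ∈ J := fun x hx y hy => by
    rw [sub_eq_add_neg]; exact hJ_add x hx (-y) (hJ_neg y hy)
  have hnJ_neg : ∀ x ∈ J, nJ (-x) = nJ x := fun x hx => by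
    have h := hnJ_smul (-1) x hx
    simpa using h
  have hnJ_zero : nJ 0 = 0 := (hnJ_def 0 hJ_zero).mpr rfl
  have hnJ_nonneg : ∀ x ∈ J, 0 ≤ nJ x := fun x hx => by
    have h1 := hnJ_add x hx (-x) (hJ_neg x hx)
    rw [add_neg_cancel, hnJ_zero, hnJ_neg x hx] at h1
    linarith
  have hτ_neg : ∀ y ∈ J, τ (-y) = -τ y := fun y hy => by
    have h := hτ_smul (-1) y hy
    simpa using h
  -- the iterated commutators
  have hcs : ∀ n, adSeq T W (n + 1) = T * adSeq T W n - adSeq T W n * T := fun n => rfl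
  have hc1 : adSeq T W 1 = T * W - W * T := rfl
  have hcJ : ∀ n, adSeq T W (n + 1) ∈ J := by
    intro n
    induction n with
    | zero => exact hTW
    | succ n ih =>
      rw [hcs]
      exact hJ_sub _ (hJ_mul_left T _ ih) _ (hJ_mul_right T _ ih)
  have hnJT : ∀ x ∈ J, nJ (T * x) ≤ ‖T‖ * nJ x := fun x hx => by
    have h := h_abc T 1 x hx
    simpa using h
  have hnJT' : ∀ x ∈ J, nJ (x * T) ≤ nJ x * ‖T‖ := fun x hx => by
    have h := h_abc 1 T x hx
    simpa using h
  have hbound : ∀ n, nJ (adSeq T W (n + 1)) ≤ (2 * ‖T‖) ^ n * nJ (adSeq T W 1) := by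
    intro n
    induction n with
    | zero => simp
    | succ n ih =>
      have hm := hcJ n
      calc nJ (adSeq T W (n + 2))
          = nJ (T * adSeq T W (n + 1) + -(adSeq T W (n + 1) * T)) := by
            rw [hcs (n + 1), sub_eq_add_neg]
        _ ≤ nJ (T * adSeq T W (n + 1)) + nJ (-(adSeq T W (n + 1) * T)) :=
            hnJ_add _ (hJ_mul_left T _ hm) _ (hJ_neg _ (hJ_mul_right T _ hm))
        _ = nJ (T * adSeq T W (n + 1)) + nJ (adSeq T W (n + 1) * T) := by
            rw [hnJ_neg _ (hJ_mul_right T _ hm)]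
        _ ≤ ‖T‖ * nJ (adSeq T W (n + 1)) + nJ (adSeq T W (n + 1)) * ‖T‖ :=
            add_le_add (hnJT _ hm) (hnJT' _ hm)
        _ = (2 * ‖T‖) * nJ (adSeq T W (n + 1)) := by ring
        _ ≤ (2 * ‖T‖) * ((2 * ‖T‖) ^ n * nJ (adSeq T W 1)) := by
            apply mul_le_mul_of_nonneg_left ih
            positivity
        _ = (2 * ‖T‖) ^ (n + 1) * nJ (adSeq T W 1) := by ring
  -- partial sums
  let u : ℕ → A := fun N => ∑ n ∈ Finset.range N, (((n + 1)! : ℂ))⁻¹ • adSeq T W (n + 1)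
  have hu : ∀ N, u N = ∑ n ∈ Finset.range N, (((n + 1)! : ℂ))⁻¹ • adSeq T W (n + 1) :=
    fun _ => rfl
  have huJ : ∀ N, u N ∈ J := by
    intro N
    induction N with
    | zero => simpa [hu] using hJ_zero
    | succ N ih =>
      rw [hu, Finset.sum_range_succ, ← hu N]
      exact hJ_add _ ih _ (hJ_smul _ _ (hcJ N))
  -- the dominating series
  let b : ℕ → ℝ := fun n => ‖(((n + 1)! : ℂ))⁻¹‖ * ((2 * ‖T‖) ^ n * nJ (adSeq T W 1))
  have hb : ∀ n, b n = ‖(((n + 1)! : ℂ))⁻¹‖ * ((2 * ‖T‖) ^ n * nJ (adSeq T W 1)) := fun _ => rfl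
  have hterm : ∀ n, nJ ((((n + 1)! : ℂ))⁻¹ • adSeq T W (n + 1)) ≤ b n := by
    intro n
    rw [hnJ_smul _ _ (hcJ n), hb]
    exact mul_le_mul_of_nonneg_left (hbound n) (norm_nonneg _)
  have hbsum : Summable b := by
    have hS : Summable (fun n : ℕ => (2 * ‖T‖) ^ n / (n !) * nJ (adSeq T W 1)) :=
      (Real.summable_pow_div_factorial (2 * ‖T‖)).mul_right _
    refine Summable.of_nonneg_of_le (fun n => ?_) (fun n => ?_) hS
    · rw [hb]
      have := hnJ_nonneg _ (hcJ 0)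
      positivity
    · rw [hb]
      have h1 : ‖(((n + 1)! : ℂ))⁻¹‖ = (((n + 1)! : ℝ))⁻¹ := by
        rw [norm_inv]
        norm_num
      rw [h1]
      have h2 : (((n + 1)! : ℝ))⁻¹ ≤ ((n ! : ℝ))⁻¹ := by
        apply inv_anti₀
        · exact_mod_cast Nat.factorial_pos n
        · exact_mod_cast Nat.factorial_le (Nat.le_succ n)
      have h3 : (0 : ℝ) ≤ (2 * ‖T‖) ^ n * nJ (adSeq T W 1) := by
        have := hnJ_nonneg _ (hcJ 0)
        positivity
      calc (((n + 1)! : ℝ))⁻¹ * ((2 * ‖T‖) ^ n * nJ (adSeq T W 1))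
          ≤ ((n ! : ℝ))⁻¹ * ((2 * ‖T‖) ^ n * nJ (adSeq T W 1)) :=
            mul_le_mul_of_nonneg_right h2 h3
        _ = (2 * ‖T‖) ^ n / (n !) * nJ (adSeq T W 1) := by
            rw [div_eq_inv_mul]; ring
  -- partial sums of b
  let Sb : ℕ → ℝ := fun N => ∑ n ∈ Finset.range N, b n
  have hSb : ∀ N, Sb N = ∑ n ∈ Finset.range N, b n := fun _ => rfl
  have hSbCauchy : CauchySeq Sb := hbsum.hasSum.tendsto_sum_nat.cauchySeq
  have hsum_bound : ∀ N M, N ≤ M → nJ (u M - u N) ≤ Sb M - Sb N := by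
    intro N M hNM
    induction M, hNM using Nat.le_induction with
    | base => rw [sub_self, sub_self, hnJ_zero]
    | succ M hNM ih =>
      have e : u (M + 1) - u N = (u M - u N) + ((((M + 1)! : ℂ))⁻¹ • adSeq T W (M + 1)) := by
        rw [hu (M + 1), Finset.sum_range_succ, ← hu M]
        abel
      have hmem1 : u M - u N ∈ J := hJ_sub _ (huJ M) _ (huJ N)
      have hmem2 : (((M + 1)! : ℂ))⁻¹ • adSeq T W (M + 1) ∈ J := hJ_smul _ _ (hcJ M)
      have hSbe : Sb (M + 1) = Sb M + b M := by rw [hSb (M + 1), Finset.sum_range_succ, ← hSb M]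
      calc nJ (u (M + 1) - u N)
          = nJ ((u M - u N) + ((((M + 1)! : ℂ))⁻¹ • adSeq T W (M + 1))) := by rw [e]
        _ ≤ nJ (u M - u N) + nJ ((((M + 1)! : ℂ))⁻¹ • adSeq T W (M + 1)) :=
            hnJ_add _ hmem1 _ hmem2
        _ ≤ (Sb M - Sb N) + b M := add_le_add ih (hterm M)
        _ = Sb (M + 1) - Sb N := by rw [hSbe]; ring
  have hucauchy : ∀ ε > (0 : ℝ), ∃ N, ∀ m ≥ N, ∀ n ≥ N, nJ (u m - u n) < ε := by
    intro ε hε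
    obtain ⟨N, hN⟩ := Metric.cauchySeq_iff.mp hSbCauchy ε hε
    refine ⟨N, fun m hm n hn => ?_⟩
    rcases le_total n m with h | h
    · calc nJ (u m - u n) ≤ Sb m - Sb n := hsum_bound n m h
        _ ≤ |Sb m - Sb n| := le_abs_self _
        _ = dist (Sb m) (Sb n) := (Real.dist_eq _ _).symm
        _ < ε := hN m hm n hn
    · have hswap : nJ (u m - u n) = nJ (u n - u m) := by
        rw [show u m - u n = -(u n - u m) by abel, hnJ_neg _ (hJ_sub _ (huJ n) _ (huJ m))]
      rw [hswap]
      calc nJ (u n - u m) ≤ Sb n - Sb m := hsum_bound m n h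
        _ ≤ |Sb n - Sb m| := le_abs_self _
        _ = dist (Sb n) (Sb m) := (Real.dist_eq _ _).symm
        _ < ε := hN n hn m hm
  obtain ⟨x, hxJ, hxlim⟩ := hnJ_complete u huJ hucauchy
  -- x is the A-norm limit of u, which converges to exp T * W * exp (-T) - W
  have hulim : Filter.Tendsto u Filter.atTop (nhds x) := by
    rw [Metric.tendsto_atTop]
    intro ε hε
    obtain ⟨N, hN⟩ := hxlim ε hε
    refine ⟨N, fun n hn => ?_⟩
    calc dist (u n) x = ‖u n - x‖ := dist_eq_norm _ _
      _ ≤ nJ (u n - x) := h_norm_le _ (hJ_sub _ (huJ n) _ hxJ)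
      _ < ε := hN n hn
  have hbk := baker_hasSum T W
  have hPl := hbk.tendsto_sum_nat
  have hush : ∀ N, u N = (∑ n ∈ Finset.range (N + 1), ((n ! : ℂ))⁻¹ • adSeq T W n) - W := by
    intro N
    rw [Finset.sum_range_succ']
    simp [hu, adSeq]
  have hulim2 : Filter.Tendsto u Filter.atTop (nhds (exp T * W * exp (-T) - W)) := by
    have h1 := (hPl.comp (Filter.tendsto_add_atTop_nat 1)).sub_const W
    exact Filter.Tendsto.congr (fun N => (hush N).symm) h1
  have hxval : x = exp T * W * exp (-T) - W := tendsto_nhds_unique hulim hulim2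
  -- τ of the partial sums is constant
  have hτc_zero : ∀ n, τ (adSeq T W (n + 2)) = 0 := by
    intro n
    have hm := hcJ n
    rw [hcs (n + 1), sub_eq_add_neg,
      hτ_add _ (hJ_mul_left T _ hm) _ (hJ_neg _ (hJ_mul_right T _ hm)),
      hτ_neg _ (hJ_mul_right T _ hm), hτ_trace _ hm T]
    exact add_neg_cancel _
  have hτu : ∀ N, τ (u (N + 1)) = τ (adSeq T W 1) := by
    intro N
    induction N with
    | zero =>
      rw [hu, Finset.sum_range_one, hτ_smul _ _ (hcJ 0)]
      norm_num
    | succ N ih =>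
      rw [hu, Finset.sum_range_succ, ← hu (N + 1),
        hτ_add _ (huJ (N + 1)) _ (hJ_smul _ _ (hcJ (N + 1))),
        hτ_smul _ _ (hcJ (N + 1)), hτc_zero N, mul_zero, add_zero, ih]
  -- τ x = τ (adSeq T W 1)
  obtain ⟨C, hC⟩ := hτ_cont
  have hτx : τ x = τ (adSeq T W 1) := by
    by_contra hne
    have hpos : 0 < ‖τ (adSeq T W 1) - τ x‖ := by
      rw [norm_pos_iff, sub_ne_zero]
      exact fun h => hne h.symm
    have hC'pos : (0 : ℝ) < max C 1 := lt_of_lt_of_le one_pos (le_max_right _ _)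
    obtain ⟨N, hN⟩ := hxlim (‖τ (adSeq T W 1) - τ x‖ / max C 1) (by positivity)
    set n := max N 1 with hn_def
    have hn := hN n (le_max_left _ _)
    have hnmem : u n - x ∈ J := hJ_sub _ (huJ n) _ hxJ
    have h1 : τ (u n) = τ (u n - x) + τ x := by
      have h := hτ_add _ hnmem _ hxJ
      rw [sub_add_cancel] at h
      exact h
    have h2 : τ (u n) = τ (adSeq T W 1) := by
      obtain ⟨m, hm⟩ : ∃ m, n = m + 1 := ⟨n - 1, by omega⟩
      rw [hm]
      exact hτu m
    have h3 : ‖τ (adSeq T W 1) - τ x‖ ≤ max C 1 * nJ (u n - x) := by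
      have he : τ (adSeq T W 1) - τ x = τ (u n - x) := by rw [← h2, h1]; ring
      rw [he]
      calc ‖τ (u n - x)‖ ≤ C * nJ (u n - x) := hC _ hnmem
        _ ≤ max C 1 * nJ (u n - x) :=
            mul_le_mul_of_nonneg_right (le_max_left _ _) (hnJ_nonneg _ hnmem)
    have h4 : max C 1 * nJ (u n - x) < max C 1 * (‖τ (adSeq T W 1) - τ x‖ / max C 1) :=
      mul_lt_mul_of_pos_left hn hC'pos
    rw [mul_div_cancel₀ _ (ne_of_gt hC'pos)] at h4
    linarith
  -- commutation of W with exp of multiples of W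
  have hWEt : ∀ s : ℝ, Commute W (exp ((s : ℂ) • W)) := fun s =>
    ((Commute.refl W).smul_right _).exp_right
  have hWEt' : ∀ s : ℝ, Commute W (exp (-((s : ℂ) • W))) := fun s =>
    (((Commute.refl W).smul_right _).neg_right).exp_right
  have hEtW : ∀ s : ℝ, exp ((s : ℂ) • W) * W * exp (-((s : ℂ) • W)) = W := fun s => by
    rw [← (hWEt s).eq, mul_assoc, hinv, mul_one]
  -- the key algebraic identity
  have hkey : ∀ s : ℝ,
      W - exp ((s : ℂ) • W) * exp T * W * exp (-T) * exp (-((s : ℂ) • W)) =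
        exp ((s : ℂ) • W) * (-x) * exp (-((s : ℂ) • W)) := by
    intro s
    have h1 : exp T * W * exp (-T) = x + W := by rw [hxval]; abel
    have h2 : exp ((s : ℂ) • W) * exp T * W * exp (-T) * exp (-((s : ℂ) • W)) =
        exp ((s : ℂ) • W) * (exp T * W * exp (-T)) * exp (-((s : ℂ) • W)) := by
      simp only [mul_assoc]
    rw [h2, h1]
    have h3 : exp ((s : ℂ) • W) * (x + W) * exp (-((s : ℂ) • W)) =
        exp ((s : ℂ) • W) * x * exp (-((s : ℂ) • W)) +
          exp ((s : ℂ) • W) * W * exp (-((s : ℂ) • W)) := by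
      noncomm_ring
    have h4 : exp ((s : ℂ) • W) * (-x) * exp (-((s : ℂ) • W)) =
        -(exp ((s : ℂ) • W) * x * exp (-((s : ℂ) • W))) := by
      noncomm_ring
    rw [h3, hEtW s, h4]
    abel
  have hmemJ : ∀ s : ℝ, exp ((s : ℂ) • W) * (-x) * exp (-((s : ℂ) • W)) ∈ J := fun s =>
    hJ_mul_right _ _ (hJ_mul_left _ _ (hJ_neg x hxJ))
  -- τ of the integrand is constant
  have hτconst : ∀ s : ℝ,
      τ (exp ((s : ℂ) • W) * (-x) * exp (-((s : ℂ) • W))) = τ (-x) := by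
    intro s
    have hj : (-x) * exp (-((s : ℂ) • W)) ∈ J := hJ_mul_right _ _ (hJ_neg x hxJ)
    rw [mul_assoc, ← hτ_trace _ hj (exp ((s : ℂ) • W)), mul_assoc, hinv', mul_one]
  -- derivative facts
  have hconv : ∀ s : ℝ, exp ((s : ℂ) • W) = exp (s • W) := fun s => by
    rw [Complex.coe_smul]
  have hconv' : ∀ s : ℝ, exp (-((s : ℂ) • W)) = exp (s • (-W)) := fun s => by
    rw [show -((s : ℂ) • W) = (s : ℂ) • (-W) from (smul_neg _ _).symm, Complex.coe_smul]
  have hDf : ∀ t : ℝ, HasDerivAt (fun s : ℝ => exp ((s : ℂ) • W))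
      (W * exp ((t : ℂ) • W)) t := by
    intro t
    have h := hasDerivAt_exp_smul_const' (𝕂 := ℝ) W t
    have hfun : (fun s : ℝ => exp ((s : ℂ) • W)) = fun s : ℝ => exp (s • W) :=
      funext hconv
    rw [hfun, hconv t]
    exact h
  have hDg : ∀ t : ℝ, HasDerivAt (fun s : ℝ => exp (-((s : ℂ) • W)))
      (exp (-((t : ℂ) • W)) * (-W)) t := by
    intro t
    have h := hasDerivAt_exp_smul_const (𝕂 := ℝ) (-W) t
    have hfun : (fun s : ℝ => exp (-((s : ℂ) • W))) = fun s : ℝ => exp (s • (-W)) :=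
      funext hconv'
    rw [hfun, hconv' t]
    exact h
  constructor
  · intro t ht
    refine ⟨by rw [hkey t]; exact hmemJ t, ?_⟩
    have hβfun : β = fun s : ℝ =>
        ((exp ((s : ℂ) • W) * exp T) * exp (-((s : ℂ) • W))) * exp (-T) :=
      funext hβ
    have hD1 := (hDf t).mul_const (exp T)
    have hD2 := hD1.mul (hDg t)
    have hD3 := hD2.mul_const (exp (-T))
    refine ⟨_, by rw [hβfun]; exact hD3, ?_⟩
    have l1 : ∀ z : A, exp T * (exp (-T) * z) = z := fun z => by
      rw [← mul_assoc, hinv, one_mul]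
    have l2 : ∀ z : A, exp (-T) * (exp T * z) = z := fun z => by
      rw [← mul_assoc, hinv', one_mul]
    have l3 : ∀ z : A, exp ((t : ℂ) • W) * (exp (-((t : ℂ) • W)) * z) = z := fun z => by
      rw [← mul_assoc, hinv, one_mul]
    have l4 : ∀ z : A, exp (-((t : ℂ) • W)) * (exp ((t : ℂ) • W) * z) = z := fun z => by
      rw [← mul_assoc, hinv', one_mul]
    have l5 : ∀ z : A, exp (-((t : ℂ) • W)) * (W * z) =
        W * (exp (-((t : ℂ) • W)) * z) := fun z => by
      rw [← mul_assoc, ← (hWEt' t).eq, mul_assoc]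
    simp only [add_mul, neg_mul, mul_neg, mul_assoc, l1, l2, l3, l4, l5, hinv, hinv',
      mul_one, sub_eq_add_neg]
    all_goals abel
  · have hint : (∫ t in (0 : ℝ)..1,
        τ (W - exp ((t : ℂ) • W) * exp T * W * exp (-T) * exp (-((t : ℂ) • W)))) =
        τ (-x) := by
      have hconstf : ∀ t : ℝ,
          τ (W - exp ((t : ℂ) • W) * exp T * W * exp (-T) * exp (-((t : ℂ) • W))) =
            τ (-x) := fun t => by rw [hkey t, hτconst t]
      rw [intervalIntegral.integral_congr (g := fun _ => τ (-x)) (fun t _ => hconstf t)]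
      simp
    rw [hint, hτ_neg x hxJ, neg_neg, hτx, hc1]
end

section
/- Let f : ℝ → ℂ be differentiable with |f(t)| ≤ M and |f′(t)| ≤ M′ for all t ∈ ℝ, where M, M′ ≥ 0. Then for every x ∈ ℝ, ∫_ℝ |f(x+t) − f(x)|² / (π·t)² dt ≤ (M + M′)². -/
open MeasureTheory Real Set

/-- If `f : ℝ → ℂ` is differentiable with `|f| ≤ M` and `|f'| ≤ M'`, then for every `x`,
`∫_ℝ |f(x+t) - f(x)|² / (π t)² dt ≤ (M + M')²`. -/
theorem kernel_l2_bound (f : ℝ → ℂ) (hf : Differentiable ℝ f) (M M' : ℝ) (hM : 0 ≤ M)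
    (hM' : 0 ≤ M') (hboundf : ∀ t : ℝ, ‖f t‖ ≤ M) (hboundf' : ∀ t : ℝ, ‖deriv f t‖ ≤ M')
    (x : ℝ) :
    ∫ t : ℝ, ‖f (x + t) - f x‖ ^ 2 / (π * t) ^ 2 ≤ (M + M') ^ 2 := by
  have hπ : (0:ℝ) < π := Real.pi_pos
  set G : ℝ → ℝ := fun s => if s ≤ 1 then M' ^ 2 / π ^ 2 else (2 * M) ^ 2 / (π * s) ^ 2 with hG
  -- Lipschitz bound
  have hlip : LipschitzWith ⟨M', hM'⟩ f := by
    apply lipschitzWith_of_nnnorm_deriv_le hf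
    intro y
    exact_mod_cast hboundf' y
  have hlip' : ∀ t : ℝ, ‖f (x + t) - f x‖ ≤ M' * |t| := by
    intro t
    have := hlip.dist_le_mul (x + t) x
    have h2 : ‖f (x + t) - f x‖ ≤ ((⟨M', hM'⟩ : NNReal) : ℝ) * |t| := by
      rw [dist_eq_norm, dist_eq_norm, Real.norm_eq_abs, add_sub_cancel_left] at this
      exact this
    exact h2
  -- pointwise bound
  have hbd : ∀ t : ℝ, ‖f (x + t) - f x‖ ^ 2 / (π * t) ^ 2 ≤ G |t| := by
    intro t
    rcases eq_or_ne t 0 with rfl | ht0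
    · simp only [hG, abs_zero, zero_le_one, if_pos, mul_zero, ne_eq, OfNat.ofNat_ne_zero,
        not_false_eq_true, zero_pow, div_zero]
      positivity
    · have ht2 : (0:ℝ) < t ^ 2 := by positivity
      by_cases h1 : |t| ≤ 1
      · simp only [hG, if_pos h1]
        have h2 : ‖f (x + t) - f x‖ ^ 2 ≤ M' ^ 2 * t ^ 2 := by
          calc ‖f (x + t) - f x‖ ^ 2 ≤ (M' * |t|) ^ 2 :=
                pow_le_pow_left₀ (norm_nonneg _) (hlip' t) 2
            _ = M' ^ 2 * t ^ 2 := by rw [mul_pow, sq_abs]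
        rw [mul_pow, div_le_div_iff₀ (by positivity) (by positivity)]
        calc ‖f (x + t) - f x‖ ^ 2 * π ^ 2 ≤ (M' ^ 2 * t ^ 2) * π ^ 2 :=
              mul_le_mul_of_nonneg_right h2 (by positivity)
          _ = M' ^ 2 * (π ^ 2 * t ^ 2) := by ring
      · simp only [hG, if_neg h1]
        have habs : (π * |t|) ^ 2 = (π * t) ^ 2 := by
          rw [mul_pow, mul_pow, sq_abs]
        rw [habs]
        have h3 : ‖f (x + t) - f x‖ ≤ 2 * M := by
          calc ‖f (x + t) - f x‖ ≤ ‖f (x + t)‖ + ‖f x‖ := norm_sub_le _ _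
            _ ≤ M + M := add_le_add (hboundf _) (hboundf _)
            _ = 2 * M := by ring
        exact div_le_div_of_nonneg_right (pow_le_pow_left₀ (norm_nonneg _) h3 2) (by positivity)
  -- Integrability pieces of G on Ioi 0
  have hIoc : IntegrableOn G (Ioc (0:ℝ) 1) := by
    have hc : IntegrableOn (fun _ : ℝ => M' ^ 2 / π ^ 2) (Ioc (0:ℝ) 1) := by
      exact integrableOn_const (by simp [Real.volume_Ioc]) (by simp)
    exact hc.congr_fun (fun s hs => by simp [hG, hs.2]) measurableSet_Ioc
  have hIoi1 : IntegrableOn G (Ioi (1:ℝ)) := by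
    have : IntegrableOn (fun s : ℝ => (2 * M) ^ 2 / π ^ 2 * s ^ (-2 : ℝ)) (Ioi (1:ℝ)) :=
      (integrableOn_Ioi_rpow_of_lt (by norm_num) one_pos).const_mul _
    apply this.congr_fun (fun s hs => ?_) measurableSet_Ioi
    have hs0 : (0:ℝ) < s := lt_trans one_pos hs
    simp only [hG, if_neg (not_le.2 (show (1:ℝ) < s from hs))]
    rw [rpow_neg hs0.le, rpow_two, mul_pow]
    field_simp
  have hIoi : IntegrableOn G (Ioi (0:ℝ)) := by
    have := hIoc.union hIoi1
    rwa [Ioc_union_Ioi_eq_Ioi zero_le_one] at this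
  -- Integrability of G ∘ abs on ℝ
  have hInt : Integrable (fun t : ℝ => G |t|) := by
    have hIoiAbs : IntegrableOn (fun t : ℝ => G |t|) (Ioi 0) := by
      apply hIoi.congr_fun (fun s hs => ?_) measurableSet_Ioi
      rw [abs_of_pos hs]
    have int_Iic : IntegrableOn (fun t : ℝ => G |t|) (Iic 0) := by
      rw [← Measure.map_neg_eq_self (volume : Measure ℝ)]
      have m : MeasurableEmbedding fun x : ℝ => -x :=
        (Homeomorph.neg ℝ).measurableEmbedding
      rw [m.integrableOn_map_iff]
      simp_rw [Function.comp_def, abs_neg, neg_preimage, neg_Iic, neg_zero]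
      exact (integrableOn_Ici_iff_integrableOn_Ioi (by simp)).mpr hIoiAbs
    have := int_Iic.union hIoiAbs
    rwa [Iic_union_Ioi, integrableOn_univ] at this
  -- main estimate
  calc ∫ t : ℝ, ‖f (x + t) - f x‖ ^ 2 / (π * t) ^ 2 ≤ ∫ t : ℝ, G |t| := by
        apply integral_mono_of_nonneg (Filter.Eventually.of_forall fun t => by positivity) hInt
          (Filter.Eventually.of_forall hbd)
    _ = 2 * ∫ s in Ioi (0:ℝ), G s := integral_comp_abs
    _ = 2 * ((∫ s in Ioc (0:ℝ) 1, G s) + ∫ s in Ioi (1:ℝ), G s) := by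
        rw [← setIntegral_union (Ioc_disjoint_Ioi le_rfl) measurableSet_Ioi hIoc hIoi1,
          Ioc_union_Ioi_eq_Ioi zero_le_one]
    _ ≤ (M + M') ^ 2 := by
        have e1 : (∫ s in Ioc (0:ℝ) 1, G s) = M' ^ 2 / π ^ 2 := by
          rw [setIntegral_congr_fun measurableSet_Ioc
            (g := fun _ : ℝ => M' ^ 2 / π ^ 2) (fun s hs => by simp [hG, hs.2])]
          simp [Real.volume_Ioc]
        have e2 : (∫ s in Ioi (1:ℝ), G s) = (2 * M) ^ 2 / π ^ 2 := by
          rw [setIntegral_congr_fun measurableSet_Ioi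
            (g := fun s : ℝ => (2 * M) ^ 2 / π ^ 2 * s ^ (-2 : ℝ)) (fun s hs => ?_)]
          · rw [integral_const_mul, integral_Ioi_rpow_of_lt (by norm_num) one_pos]
            norm_num
          · have hs0 : (0:ℝ) < s := lt_trans one_pos hs
            simp only [hG, if_neg (not_le.2 (show (1:ℝ) < s from hs))]
            rw [rpow_neg hs0.le, rpow_two, mul_pow]
            field_simp
        rw [e1, e2, ← add_div, ← mul_div_assoc, div_le_iff₀ (by positivity)]
        have hπ3 : (3:ℝ) < π := Real.pi_gt_three
        have h9 : (9:ℝ) ≤ π ^ 2 := by nlinarith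
        nlinarith [mul_nonneg hM hM', sq_nonneg (M + M'),
          mul_le_mul_of_nonneg_left h9 (sq_nonneg (M + M'))]
end

section
/- Let (X, μ) be a probability measure space and let α : ℝ × X → X be a jointly measurable action of (ℝ, +) on X (α(0,x) = x and α(s+t, x) = α(s, α(t,x))) such that each map x ↦ α(t,x) preserves μ. Let φ : X → ℂ be measurable with |φ(x)| ≤ M for all x, and suppose there is a measurable function φ′ : X → ℂ with |φ′(x)| ≤ M′ for all x such that for every x ∈ X and t ∈ ℝ, the function s ↦ φ(α(s,x)) has derivative φ′(α(t,x)) at s = t. Define k_φ : X × ℝ → ℂ by k_φ(x,t) = (φ(α(t,x)) − φ(x))/(π·t) for t ≠ 0 and k_φ(x,0) = φ′(x)/π. Then k_φ belongs to L²(X × ℝ, μ ⊗ Lebesgue) and ‖k_φ‖_{L²(X×ℝ)} ≤ M + M′. -/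
open MeasureTheory Real
open scoped ENNReal

/-- Let `μ` be a probability measure on `X`, invariant under a jointly measurable flow `α` of
`ℝ` on `X`.  If `φ : X → ℂ` is measurable with `|φ| ≤ M` and is differentiable along the flow
with measurable derivative `φ'` satisfying `|φ'| ≤ M'`, then the kernel
`k_φ(x,t) = (φ(α t x) - φ x)/(π t)` (with value `φ'(x)/π` at `t = 0`) belongs to
`L²(X × ℝ, μ ⊗ Leb)` with norm at most `M + M'`. -/
theorem kernel_memL2 {X : Type*} [MeasurableSpace X] (μ : Measure X) [IsProbabilityMeasure μ]
    (α : ℝ → X → X) (hα_meas : Measurable fun p : ℝ × X => α p.1 p.2)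
    (hα_zero : ∀ x, α 0 x = x)
    (hα_add : ∀ s t : ℝ, ∀ x, α (s + t) x = α s (α t x))
    (hα_inv : ∀ t : ℝ, MeasurePreserving (α t) μ μ)
    (φ : X → ℂ) (hφ_meas : Measurable φ) (M : ℝ) (hM : ∀ x, ‖φ x‖ ≤ M)
    (φ' : X → ℂ) (hφ'_meas : Measurable φ') (M' : ℝ) (hM' : ∀ x, ‖φ' x‖ ≤ M')
    (hderiv : ∀ x, ∀ t : ℝ, HasDerivAt (fun s : ℝ => φ (α s x)) (φ' (α t x)) t)
    (k : X × ℝ → ℂ)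
    (hk : ∀ p : X × ℝ, k p = if p.2 = 0 then φ' p.1 / (π : ℂ)
      else (φ (α p.2 p.1) - φ p.1) / ((π : ℂ) * (p.2 : ℂ))) :
    MemLp k 2 (μ.prod volume) ∧
      eLpNorm k 2 (μ.prod volume) ≤ ENNReal.ofReal (M + M') := by
  have hπ : (0:ℝ) < π := Real.pi_pos
  have hX : Nonempty X := by
    by_contra h
    rw [not_nonempty_iff] at h
    have h1 : μ Set.univ = 1 := measure_univ
    rw [Set.univ_eq_empty_iff.mpr h, measure_empty] at h1
    exact zero_ne_one h1
  obtain ⟨x₀⟩ := hX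
  have hM0 : 0 ≤ M := le_trans (norm_nonneg _) (hM x₀)
  have hM'0 : 0 ≤ M' := le_trans (norm_nonneg _) (hM' x₀)
  have hkfun : k = fun p : X × ℝ => if p.2 = 0 then φ' p.1 / (π : ℂ)
      else (φ (α p.2 p.1) - φ p.1) / ((π : ℂ) * (p.2 : ℂ)) := funext hk
  have hmk : Measurable k := by
    rw [hkfun]
    have h0 : MeasurableSet {p : X × ℝ | p.2 = 0} :=
      measurable_snd (measurableSet_singleton (0:ℝ))
    exact Measurable.ite h0
      ((hφ'_meas.comp measurable_fst).div measurable_const)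
      (((hφ_meas.comp (hα_meas.comp measurable_swap)).sub
          (hφ_meas.comp measurable_fst)).div
        (measurable_const.mul (Complex.measurable_ofReal.comp measurable_snd)))
  have hlip : ∀ x, ∀ t : ℝ, ‖φ (α t x) - φ x‖ ≤ M' * |t| := by
    intro x t
    have h := Convex.norm_image_sub_le_of_norm_hasDerivWithin_le
      (f := fun s : ℝ => φ (α s x)) (f' := fun s => φ' (α s x)) (C := M')
      (fun s _ => (hderiv x s).hasDerivWithinAt) (fun s _ => hM' _) convex_univ
      (Set.mem_univ (0:ℝ)) (Set.mem_univ t)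
    simpa [hα_zero x, Real.norm_eq_abs] using h
  set g : ℝ → ℝ := fun t => if |t| ≤ 1 then M' / π else 2 * M / (π * |t|) with hg
  have hg_nonneg : ∀ t, 0 ≤ g t := by
    intro t
    rw [hg]
    by_cases h1 : |t| ≤ 1
    · simp only [if_pos h1]
      exact div_nonneg hM'0 hπ.le
    · simp only [if_neg h1]
      exact div_nonneg (by linarith) (mul_nonneg hπ.le (abs_nonneg t))
  have hbound : ∀ p : X × ℝ, ‖k p‖ ≤ g p.2 := by
    rintro ⟨x, t⟩
    rw [hk]
    by_cases ht : t = 0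
    · subst ht
      simp only [if_pos rfl, hg, abs_zero]
      norm_num
      rw [abs_of_pos hπ]
      gcongr
      simpa using hM' x
    · simp only [if_neg ht]
      have htpos : 0 < |t| := abs_pos.mpr ht
      have hnorm : ‖(φ (α t x) - φ x) / ((π:ℂ) * (t:ℂ))‖
          = ‖φ (α t x) - φ x‖ / (π * |t|) := by
        rw [norm_div]
        congr 1
        rw [show ((π:ℂ) * (t:ℂ)) = ((π * t : ℝ) : ℂ) by push_cast; ring,
          Complex.norm_real, Real.norm_eq_abs, abs_mul, abs_of_pos hπ]
      rw [hnorm, hg]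
      by_cases h1 : |t| ≤ 1
      · simp only [if_pos h1]
        have hstep : ‖φ (α t x) - φ x‖ / (π * |t|) ≤ (M' * |t|) / (π * |t|) := by
          gcongr
          exact hlip x t
        refine hstep.trans (le_of_eq ?_)
        field_simp
      · simp only [if_neg h1]
        have h2M : ‖φ (α t x) - φ x‖ ≤ 2 * M := by
          calc ‖φ (α t x) - φ x‖ ≤ ‖φ (α t x)‖ + ‖φ x‖ := norm_sub_le _ _
            _ ≤ M + M := add_le_add (hM _) (hM _)
            _ = 2 * M := by ring
        gcongr
  -- the key integral bound
  have hgm2 : Measurable fun t : ℝ => ENNReal.ofReal (g t ^ 2) := by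
    apply Measurable.ennreal_ofReal
    apply Measurable.pow_const
    rw [hg]
    have hset : {t : ℝ | |t| ≤ 1} = Set.Icc (-1 : ℝ) 1 := by
      ext t
      simp only [Set.mem_setOf_eq, Set.mem_Icc]
      exact abs_le
    refine Measurable.ite ?_ measurable_const ?_
    · rw [hset]; exact measurableSet_Icc
    · exact measurable_const.div (measurable_const.mul continuous_abs.measurable)
  have hsnd : MeasurePreserving (Prod.snd : X × ℝ → ℝ) (μ.prod volume) volume :=
    ⟨measurable_snd, by simp [Measure.map_snd_prod, measure_univ]⟩
  -- integral of g² over the reals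
  have hIoi : ∫⁻ t in Set.Ioi (1:ℝ), ENNReal.ofReal (g t ^ 2)
      = ENNReal.ofReal ((2 * M / π) ^ 2) := by
    have hcong : ∀ t ∈ Set.Ioi (1:ℝ), ENNReal.ofReal (g t ^ 2)
        = ENNReal.ofReal ((2 * M / π) ^ 2 * t ^ (-2 : ℝ)) := by
      intro t ht
      have ht1 : (1:ℝ) < t := ht
      have htpos : (0:ℝ) < t := lt_trans one_pos ht1
      have habs : |t| = t := abs_of_pos htpos
      have hnle : ¬ |t| ≤ 1 := by rw [habs]; linarith
      rw [hg]
      simp only [if_neg hnle]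
      congr 1
      have h2 : t ^ (-2:ℝ) = (t ^ 2)⁻¹ := by
        rw [Real.rpow_neg htpos.le, show ((2:ℝ)) = ((2:ℕ):ℝ) by norm_num,
          Real.rpow_natCast]
      rw [habs, h2, div_pow, div_pow, mul_pow π t, div_mul_eq_div_div,
        div_eq_mul_inv ((2*M)^2/π^2)]
    rw [setLIntegral_congr_fun measurableSet_Ioi hcong,
      ← ofReal_integral_eq_lintegral_ofReal]
    · congr 1
      rw [integral_const_mul, integral_Ioi_rpow_of_lt (by norm_num) one_pos]
      norm_num
    · exact (integrableOn_Ioi_rpow_of_lt (by norm_num) one_pos).const_mul _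
    · refine (ae_restrict_iff' measurableSet_Ioi).2 (ae_of_all _ fun t ht => ?_)
      have htpos : (0:ℝ) < t := lt_trans one_pos ht
      exact mul_nonneg (sq_nonneg _) (Real.rpow_nonneg htpos.le _)
  have hIio : ∫⁻ t in Set.Iio (-1:ℝ), ENNReal.ofReal (g t ^ 2)
      = ∫⁻ t in Set.Ioi (1:ℝ), ENNReal.ofReal (g t ^ 2) := by
    have hneg : MeasurePreserving (fun t : ℝ => -t) volume volume :=
      Measure.measurePreserving_neg _
    have hemb : MeasurableEmbedding (fun t : ℝ => -t) :=
      (Homeomorph.neg ℝ).measurableEmbedding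
    have h := hneg.setLIntegral_comp_preimage_emb hemb
      (fun t => ENNReal.ofReal (g t ^ 2)) (Set.Iio (-1))
    rw [← h]
    have hpre : (fun t : ℝ => -t) ⁻¹' Set.Iio (-1) = Set.Ioi 1 := by
      ext t
      simp only [Set.mem_preimage, Set.mem_Iio, Set.mem_Ioi]
      constructor <;> intro <;> linarith
    rw [hpre]
    refine (setLIntegral_congr_fun measurableSet_Ioi fun t ht => ?_).symm
    have : g (-t) = g t := by rw [hg]; simp [abs_neg]
    rw [this]
  have hIcc : ∫⁻ t in Set.Icc (-1:ℝ) 1, ENNReal.ofReal (g t ^ 2)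
      = ENNReal.ofReal ((M' / π) ^ 2 * 2) := by
    have hcong : ∀ t ∈ Set.Icc (-1:ℝ) 1, ENNReal.ofReal (g t ^ 2)
        = ENNReal.ofReal ((M' / π) ^ 2) := by
      intro t ht
      have h1 : |t| ≤ 1 := abs_le.mpr ⟨ht.1, ht.2⟩
      rw [hg]
      simp only [if_pos h1]
    rw [setLIntegral_congr_fun measurableSet_Icc hcong,
      setLIntegral_const, Real.volume_Icc]
    rw [← ENNReal.ofReal_mul (by positivity)]
    norm_num
  have hgtotal : ∫⁻ t, ENNReal.ofReal (g t ^ 2)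
      ≤ ENNReal.ofReal ((M + M') ^ 2) := by
    rw [← lintegral_add_compl (fun t => ENNReal.ofReal (g t ^ 2))
      (measurableSet_Icc (a := (-1:ℝ)) (b := 1))]
    have hcompl : (Set.Icc (-1:ℝ) 1)ᶜ = Set.Iio (-1) ∪ Set.Ioi 1 := by
      ext t
      simp only [Set.mem_compl_iff, Set.mem_Icc, Set.mem_union, Set.mem_Iio, Set.mem_Ioi]
      constructor
      · intro h; by_contra hc; push_neg at hc; exact h ⟨hc.1, hc.2⟩
      · rintro (h | h) ⟨h1, h2⟩ <;> linarith
    rw [hcompl]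
    rw [lintegral_union measurableSet_Ioi
      (by rw [Set.disjoint_left]; intro t ht1 ht2;
          simp only [Set.mem_Iio] at ht1; simp only [Set.mem_Ioi] at ht2; linarith)]
    rw [hIcc, hIio, hIoi]
    rw [← ENNReal.ofReal_add (by positivity) (by positivity),
      ← ENNReal.ofReal_add (by positivity) (by positivity)]
    apply ENNReal.ofReal_le_ofReal
    have h1 : (M' / π) ^ 2 * 2 + ((2 * M / π) ^ 2 + (2 * M / π) ^ 2)
        = (M' ^ 2 * 2 + 8 * M ^ 2) / π ^ 2 := by
      field_simp
      ring
    rw [h1, div_le_iff₀ (by positivity)]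
    have h9 : (9:ℝ) ≤ π ^ 2 := by nlinarith [Real.pi_gt_three]
    nlinarith [mul_nonneg hM0 hM'0, sq_nonneg (M + M'), sq_nonneg M, sq_nonneg M']
  have key : ∫⁻ p, (‖k p‖₊ : ℝ≥0∞) ^ (2:ℝ) ∂(μ.prod volume)
      ≤ ENNReal.ofReal ((M + M') ^ 2) := by
    have step1 : ∫⁻ p, (‖k p‖₊ : ℝ≥0∞) ^ (2:ℝ) ∂(μ.prod volume)
        ≤ ∫⁻ p, ENNReal.ofReal (g p.2 ^ 2) ∂(μ.prod volume) := by
      apply lintegral_mono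
      intro p
      have h1 : (‖k p‖₊ : ℝ≥0∞) ≤ ENNReal.ofReal (g p.2) := by
        rw [← enorm_eq_nnnorm, ← ofReal_norm]
        exact ENNReal.ofReal_le_ofReal (hbound p)
      calc (‖k p‖₊ : ℝ≥0∞) ^ (2:ℝ) ≤ ENNReal.ofReal (g p.2) ^ (2:ℝ) :=
            ENNReal.rpow_le_rpow h1 (by norm_num)
        _ = ENNReal.ofReal (g p.2 ^ 2) := by
            rw [show ((2:ℝ)) = ((2:ℕ):ℝ) by norm_num, ENNReal.rpow_natCast,
              ENNReal.ofReal_pow (hg_nonneg _)]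
    have step2 : ∫⁻ p, ENNReal.ofReal (g p.2 ^ 2) ∂(μ.prod volume)
        = ∫⁻ t, ENNReal.ofReal (g t ^ 2) := hsnd.lintegral_comp hgm2
    exact step1.trans (step2.le.trans hgtotal)
  have heLp : eLpNorm k 2 (μ.prod volume) ≤ ENNReal.ofReal (M + M') := by
    rw [eLpNorm_eq_lintegral_rpow_enorm_toReal (by norm_num) (by norm_num)]
    simp only [ENNReal.toReal_ofNat]
    calc (∫⁻ p, (‖k p‖₊ : ℝ≥0∞) ^ (2:ℝ) ∂(μ.prod volume)) ^ (1/(2:ℝ))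
        ≤ (ENNReal.ofReal ((M + M') ^ 2)) ^ (1/(2:ℝ)) :=
          ENNReal.rpow_le_rpow key (by norm_num)
      _ = ENNReal.ofReal (((M + M') ^ 2) ^ (1/(2:ℝ))) := by
          rw [← ENNReal.ofReal_rpow_of_nonneg (by positivity) (by norm_num)]
      _ = ENNReal.ofReal (M + M') := by
          congr 1
          rw [← Real.rpow_natCast (M + M') 2, ← Real.rpow_mul (by linarith)]
          norm_num
  exact ⟨⟨hmk.aestronglyMeasurable, lt_of_le_of_lt heLp ENNReal.ofReal_lt_top⟩, heLp⟩
end
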